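/- Let L be a finite-index subgroup of ℤ^d and let m be a positive integer. (a) If S_{d,k} + L = ℤ^d, then S_{d, mk+⌊m/2⌋·d} + mL = ℤ^d, where mL = {m·v : v ∈ L}. (b) If S'_{d,k} + L = ℤ^d, then S'_{d, mk+(m−1)·d} + mL = ℤ^d. -/

import Mathlib

/-- Let `L ≤ ℤ^d` be a finite-index subgroup and `m > 0`.
(a) If `S_{d,k} + L = ℤ^d` then `S_{d, mk+⌊m/2⌋d} + mL = ℤ^d`.
(b) If `S'_{d,k} + L = ℤ^d` then `S'_{d, mk+(m−1)d} + mL = ℤ^d`. -/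
theorem stmt4 (d k m : ℕ) (hm : 0 < m) (L : AddSubgroup (Fin d → ℤ))
    (hfin : L.index ≠ 0) :
    ((∀ x : Fin d → ℤ, ∃ s : Fin d → ℤ, (∑ i, |s i|) ≤ (k : ℤ) ∧ x - s ∈ L) →
      ∀ x : Fin d → ℤ, ∃ s : Fin d → ℤ,
        (∑ i, |s i|) ≤ ((m * k + (m / 2) * d : ℕ) : ℤ) ∧
        ∃ w ∈ L, x - s = (m : ℤ) • w) ∧
    ((∀ x : Fin d → ℤ, ∃ s : Fin d → ℤ, (∀ i, 0 ≤ s i) ∧ (∑ i, s i) ≤ (k : ℤ) ∧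
        x - s ∈ L) →
      ∀ x : Fin d → ℤ, ∃ s : Fin d → ℤ, (∀ i, 0 ≤ s i) ∧
        (∑ i, s i) ≤ ((m * k + (m - 1) * d : ℕ) : ℤ) ∧
        ∃ w ∈ L, x - s = (m : ℤ) • w) := by
  have hM : (0 : ℤ) < (m : ℤ) := by exact_mod_cast hm
  constructor
  · -- part (a)
    intro h x
    -- balanced remainder
    set r : Fin d → ℤ := fun i => Int.bmod (x i) m with hr
    have hdvd : ∀ i, (m : ℤ) ∣ (x i - r i) := by
      intro i
      have : (x i - r i) % (m : ℤ) = 0 := by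
        rw [Int.sub_emod, Int.bmod_emod, sub_self, Int.zero_emod]
      exact Int.dvd_of_emod_eq_zero this
    set q : Fin d → ℤ := fun i => (x i - r i) / m with hq
    have hmq : ∀ i, (m : ℤ) * q i = x i - r i := fun i =>
      Int.mul_ediv_cancel' (hdvd i)
    have hrbd : ∀ i, |r i| ≤ (m : ℤ) / 2 := by
      intro i
      have h1 := Int.le_bmod (x := x i) hm
      have h2 := Int.bmod_lt (x := x i) hm
      rw [hr]
      beta_reduce
      rw [abs_le]
      omega
    obtain ⟨s, hs, hl⟩ := h q
    refine ⟨fun i => (m : ℤ) * s i + r i, ?_, q - s, hl, ?_⟩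
    · have hbd : ∀ i, |(m : ℤ) * s i + r i| ≤ (m : ℤ) * |s i| + (m : ℤ) / 2 := by
        intro i
        calc |(m : ℤ) * s i + r i| ≤ |(m : ℤ) * s i| + |r i| := abs_add_le _ _
        _ ≤ (m : ℤ) * |s i| + (m : ℤ) / 2 := by
            rw [abs_mul, abs_of_nonneg hM.le]
            exact add_le_add_right (hrbd i) _
      calc (∑ i, |(m : ℤ) * s i + r i|) ≤ ∑ i, ((m : ℤ) * |s i| + (m : ℤ) / 2) :=
            Finset.sum_le_sum fun i _ => hbd i
        _ = (m : ℤ) * (∑ i, |s i|) + d * ((m : ℤ) / 2) := by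
            rw [Finset.sum_add_distrib, ← Finset.mul_sum]
            simp [mul_comm]
        _ ≤ (m : ℤ) * k + d * ((m : ℤ) / 2) := by
            have := mul_le_mul_of_nonneg_left hs hM.le
            linarith
        _ = ((m * k + (m / 2) * d : ℕ) : ℤ) := by
            push_cast [Int.natCast_ediv]
            ring
    · funext i
      simp only [Pi.sub_apply, Pi.smul_apply, smul_eq_mul]
      have := hmq i
      ring_nf
      ring_nf at this
      linarith
  · -- part (b)
    intro h x
    set r : Fin d → ℤ := fun i => x i % (m : ℤ) with hr
    set q : Fin d → ℤ := fun i => x i / (m : ℤ) with hq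
    have hmq : ∀ i, (m : ℤ) * q i + r i = x i := fun i => Int.mul_ediv_add_emod _ _
    have hr0 : ∀ i, 0 ≤ r i := fun i => Int.emod_nonneg _ hM.ne'
    have hr1 : ∀ i, r i ≤ (m : ℤ) - 1 := by
      intro i
      have := Int.emod_lt_of_pos (x i) hM
      rw [hr]
      beta_reduce
      omega
    obtain ⟨s, hs0, hs, hl⟩ := h q
    refine ⟨fun i => (m : ℤ) * s i + r i, ?_, ?_, q - s, hl, ?_⟩
    · intro i
      dsimp only
      have := mul_nonneg hM.le (hs0 i)
      have := hr0 i
      linarith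
    · calc (∑ i, ((m : ℤ) * s i + r i)) ≤ ∑ i, ((m : ℤ) * s i + ((m : ℤ) - 1)) :=
            Finset.sum_le_sum fun i _ => add_le_add_right (hr1 i) _
        _ = (m : ℤ) * (∑ i, s i) + d * ((m : ℤ) - 1) := by
            rw [Finset.sum_add_distrib, ← Finset.mul_sum]
            simp [mul_comm]
            ring
        _ ≤ (m : ℤ) * k + d * ((m : ℤ) - 1) := by
            have := mul_le_mul_of_nonneg_left hs hM.le
            linarith
        _ = ((m * k + (m - 1) * d : ℕ) : ℤ) := by
            have : ((m - 1 : ℕ) : ℤ) = (m : ℤ) - 1 := by omega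
            push_cast [this]
            ring
    · funext i
      simp only [Pi.sub_apply, Pi.smul_apply, smul_eq_mul]
      have := hmq i
      ring_nf
      ring_nf at this
      linarith
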